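/- Define b : ℕ → ℝ by b(r) := (1/r²)·∑_{d ∣ r} μ(r/d)·(−1)^d·C(6d − 1, d − 1) for r ≥ 1. Then the ratio b(r)/b(r+1) tends to −5⁵/6⁶ = −3125/46656 as r → ∞. (This is the exponential growth rate of the top BPS invariants of the knot 5₂, matching the zero x₀ = −5⁵/6⁶ of the Y-discriminant x⁴(5⁵ + 6⁶x) of its top extremal A-polynomial 1 − Y − x·Y⁶.) -/

import Mathlib

open Filter

def cc (d : ℕ) : ℕ := Nat.choose (6 * d - 1) (d - 1)

lemma cc_pos (d : ℕ) : 0 < cc d := Nat.choose_pos (by omega)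

lemma cc_succ (e : ℕ) : cc (e + 1) = Nat.choose (6 * e + 5) e := by
  unfold cc
  congr 1

lemma cc_step (d : ℕ) (hd : 1 ≤ d) : 6 * cc d ≤ cc (d + 1) := by
  obtain ⟨e, rfl⟩ : ∃ e, d = e + 1 := ⟨d - 1, by omega⟩
  rw [cc_succ, show e + 1 + 1 = (e + 1) + 1 from rfl, cc_succ]
  have h := Nat.add_one_mul_choose_eq (6 * e + 5) e
  rw [show 6 * e + 5 + 1 = 6 * e + 6 by omega] at h
  have key : Nat.choose (6 * e + 6) (e + 1) = 6 * Nat.choose (6 * e + 5) e := by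
    refine Nat.eq_of_mul_eq_mul_right (show 0 < e + 1 by omega) ?_
    rw [← h]; ring
  calc 6 * Nat.choose (6 * e + 5) e = Nat.choose (6 * e + 6) (e + 1) := key.symm
    _ ≤ Nat.choose (6 * (e + 1) + 5) (e + 1) := Nat.choose_le_choose _ (by omega)

lemma cc_growth (a k : ℕ) (ha : 1 ≤ a) : 6 ^ k * cc a ≤ cc (a + k) := by
  induction k with
  | zero => simp
  | succ k ih =>
      calc 6 ^ (k + 1) * cc a = 6 * (6 ^ k * cc a) := by ring
        _ ≤ 6 * cc (a + k) := by omega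
        _ ≤ cc (a + k + 1) := cc_step _ (by omega)

lemma cc_mono {d e : ℕ} (hd : 1 ≤ d) (h : d ≤ e) : cc d ≤ cc e := by
  have h1 := cc_growth d (e - d) hd
  have h2 : 1 ≤ 6 ^ (e - d) := Nat.one_le_pow _ _ (by norm_num)
  have : d + (e - d) = e := by omega
  rw [this] at h1
  nlinarith [cc_pos d]

lemma cc_ratio (m : ℕ) :
    cc (m + 2) * ((m + 1) * ((5 * m + 6) * ((5 * m + 7) * ((5 * m + 8) * ((5 * m + 9) * (5 * m + 10))))))
      = cc (m + 1) * ((6 * m + 6) * ((6 * m + 7) * ((6 * m + 8) * ((6 * m + 9) * ((6 * m + 10) * (6 * m + 11)))))) := by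
  have h1 : cc (m + 1) * m.factorial * (5 * m + 5).factorial = (6 * m + 5).factorial := by
    rw [cc_succ]
    have := Nat.choose_mul_factorial_mul_factorial (show m ≤ 6 * m + 5 by omega)
    rwa [show 6 * m + 5 - m = 5 * m + 5 by omega] at this
  have h2 : cc (m + 2) * (m + 1).factorial * (5 * m + 10).factorial = (6 * m + 11).factorial := by
    rw [show m + 2 = (m + 1) + 1 from rfl, cc_succ]
    have := Nat.choose_mul_factorial_mul_factorial (show m + 1 ≤ 6 * (m + 1) + 5 by omega)
    rwa [show 6 * (m + 1) + 5 - (m + 1) = 5 * m + 10 by omega,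
      show 6 * (m + 1) + 5 = 6 * m + 11 by omega] at this
  have e1 : (5 * m + 10).factorial
      = (5 * m + 10) * ((5 * m + 9) * ((5 * m + 8) * ((5 * m + 7) * ((5 * m + 6) * (5 * m + 5).factorial)))) := by
    rw [show 5 * m + 10 = (5 * m + 9) + 1 by omega, Nat.factorial_succ,
      show 5 * m + 9 + 1 = 5 * m + 10 by omega,
      show 5 * m + 9 = (5 * m + 8) + 1 by omega, Nat.factorial_succ,
      show 5 * m + 8 + 1 = 5 * m + 9 by omega,
      show 5 * m + 8 = (5 * m + 7) + 1 by omega, Nat.factorial_succ,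
      show 5 * m + 7 + 1 = 5 * m + 8 by omega,
      show 5 * m + 7 = (5 * m + 6) + 1 by omega, Nat.factorial_succ,
      show 5 * m + 6 + 1 = 5 * m + 7 by omega,
      show 5 * m + 6 = (5 * m + 5) + 1 by omega, Nat.factorial_succ,
      show 5 * m + 5 + 1 = 5 * m + 6 by omega]
  have e2 : (6 * m + 11).factorial
      = (6 * m + 11) * ((6 * m + 10) * ((6 * m + 9) * ((6 * m + 8) * ((6 * m + 7) * ((6 * m + 6) * (6 * m + 5).factorial))))) := by
    rw [show 6 * m + 11 = (6 * m + 10) + 1 by omega, Nat.factorial_succ,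
      show 6 * m + 10 + 1 = 6 * m + 11 by omega,
      show 6 * m + 10 = (6 * m + 9) + 1 by omega, Nat.factorial_succ,
      show 6 * m + 9 + 1 = 6 * m + 10 by omega,
      show 6 * m + 9 = (6 * m + 8) + 1 by omega, Nat.factorial_succ,
      show 6 * m + 8 + 1 = 6 * m + 9 by omega,
      show 6 * m + 8 = (6 * m + 7) + 1 by omega, Nat.factorial_succ,
      show 6 * m + 7 + 1 = 6 * m + 8 by omega,
      show 6 * m + 7 = (6 * m + 6) + 1 by omega, Nat.factorial_succ,
      show 6 * m + 6 + 1 = 6 * m + 7 by omega,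
      show 6 * m + 6 = (6 * m + 5) + 1 by omega, Nat.factorial_succ,
      show 6 * m + 5 + 1 = 6 * m + 6 by omega]
  refine Nat.eq_of_mul_eq_mul_right
    (show 0 < m.factorial * (5 * m + 5).factorial from
      Nat.mul_pos m.factorial_pos (5 * m + 5).factorial_pos) ?_
  calc cc (m + 2) * ((m + 1) * ((5 * m + 6) * ((5 * m + 7) * ((5 * m + 8) * ((5 * m + 9) * (5 * m + 10)))))) * (m.factorial * (5 * m + 5).factorial)
      = cc (m + 2) * (m + 1).factorial * (5 * m + 10).factorial := by
        rw [show (m + 1).factorial = (m + 1) * m.factorial from Nat.factorial_succ m, e1]; ring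
    _ = (6 * m + 11).factorial := h2
    _ = ((6 * m + 6) * ((6 * m + 7) * ((6 * m + 8) * ((6 * m + 9) * ((6 * m + 10) * (6 * m + 11)))))) * (6 * m + 5).factorial := by
        rw [e2]; ring
    _ = cc (m + 1) * ((6 * m + 6) * ((6 * m + 7) * ((6 * m + 8) * ((6 * m + 9) * ((6 * m + 10) * (6 * m + 11)))))) * (m.factorial * (5 * m + 5).factorial) := by
        rw [← h1]; ring

lemma lin_tendsto (a a' bb b' : ℝ) (hb : 0 < bb) (hb' : 0 ≤ b') :
    Tendsto (fun n : ℕ => (a * n + a') / (bb * n + b')) atTop (nhds (a / bb)) := by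
  have h0 : Tendsto (fun n : ℕ => (a + a' / n) / (bb + b' / n)) atTop (nhds (a / bb)) := by
    have ha : Tendsto (fun n : ℕ => a + a' / n) atTop (nhds (a + 0)) :=
      tendsto_const_nhds.add (tendsto_const_div_atTop_nhds_zero_nat a')
    have hbb : Tendsto (fun n : ℕ => bb + b' / n) atTop (nhds (bb + 0)) :=
      tendsto_const_nhds.add (tendsto_const_div_atTop_nhds_zero_nat b')
    have := ha.div hbb (by simpa using hb.ne')
    simp only [add_zero] at this
    exact this
  refine h0.congr' ?_
  filter_upwards [eventually_gt_atTop 0] with n hn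
  have hn1 : (1 : ℝ) ≤ n := by exact_mod_cast hn
  have hn' : (n : ℝ) ≠ 0 := by positivity
  have hd1 : bb + b' / n ≠ 0 := by positivity
  have hd2 : bb * n + b' ≠ 0 := by positivity
  field_simp

lemma cc_ratio_tendsto :
    Tendsto (fun r : ℕ => (cc r : ℝ) / cc (r + 1)) atTop (nhds (3125 / 46656)) := by
  rw [← tendsto_add_atTop_iff_nat 1]
  have h1 := lin_tendsto 1 1 6 6 (by norm_num) (by norm_num)
  have h2 := lin_tendsto 5 6 6 7 (by norm_num) (by norm_num)
  have h3 := lin_tendsto 5 7 6 8 (by norm_num) (by norm_num)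
  have h4 := lin_tendsto 5 8 6 9 (by norm_num) (by norm_num)
  have h5 := lin_tendsto 5 9 6 10 (by norm_num) (by norm_num)
  have h6 := lin_tendsto 5 10 6 11 (by norm_num) (by norm_num)
  have hp := ((((h1.mul h2).mul h3).mul h4).mul h5).mul h6
  rw [show (1 / 6 * (5 / 6) * (5 / 6) * (5 / 6) * (5 / 6) * (5 / 6) : ℝ) = 3125 / 46656 by
    norm_num] at hp
  refine hp.congr fun m => ?_
  have key : (cc (m + 2) : ℝ) * ((m + 1) * ((5 * m + 6) * ((5 * m + 7) * ((5 * m + 8) * ((5 * m + 9) * (5 * m + 10))))))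
      = cc (m + 1) * ((6 * m + 6) * ((6 * m + 7) * ((6 * m + 8) * ((6 * m + 9) * ((6 * m + 10) * (6 * m + 11)))))) := by
    exact_mod_cast cc_ratio m
  have hc2 : (cc (m + 2) : ℝ) ≠ 0 := by exact_mod_cast (cc_pos (m + 2)).ne'
  have hm : (0 : ℝ) ≤ (m : ℝ) := Nat.cast_nonneg m
  have d1 : (6 * (m:ℝ) + 6) ≠ 0 := by positivity
  have d2 : (6 * (m:ℝ) + 7) ≠ 0 := by positivity
  have d3 : (6 * (m:ℝ) + 8) ≠ 0 := by positivity
  have d4 : (6 * (m:ℝ) + 9) ≠ 0 := by positivity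
  have d5 : (6 * (m:ℝ) + 10) ≠ 0 := by positivity
  have d6 : (6 * (m:ℝ) + 11) ≠ 0 := by positivity
  field_simp
  nlinarith [key]

noncomputable def SS (r : ℕ) : ℝ :=
  ∑ d ∈ r.divisors, (ArithmeticFunction.moebius (r / d) : ℝ) * (-1) ^ d *
    (Nat.choose (6 * d - 1) (d - 1) : ℝ)

noncomputable def uu (r : ℕ) : ℝ := SS r / ((-1) ^ r * (cc r : ℝ))

lemma ff_ne (r : ℕ) : ((-1 : ℝ) ^ r * (cc r : ℝ)) ≠ 0 :=
  mul_ne_zero (pow_ne_zero _ (by norm_num)) (by exact_mod_cast (cc_pos r).ne')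

lemma SS_eq (r : ℕ) : SS r = (-1) ^ r * (cc r : ℝ) * uu r := by
  rw [uu, mul_div_cancel₀ _ (ff_ne r)]

lemma err_bound (r : ℕ) (hr : 2 ≤ r) :
    |SS r - (-1) ^ r * (cc r : ℝ)| ≤ r * cc (r / 2) := by
  have hr0 : r ≠ 0 := by omega
  have hmem : r ∈ r.divisors := Nat.mem_divisors_self r hr0
  set g : ℕ → ℝ := fun d => (ArithmeticFunction.moebius (r / d) : ℝ) * (-1) ^ d *
    (Nat.choose (6 * d - 1) (d - 1) : ℝ) with hg
  have hsum : ∑ d ∈ r.divisors.erase r, g d + g r = SS r :=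
    Finset.sum_erase_add _ _ hmem
  have hgr : g r = (-1) ^ r * (cc r : ℝ) := by
    rw [hg]; simp only [Nat.div_self (by omega : 0 < r)]
    simp [ArithmeticFunction.moebius_apply_one, cc]
  have hE : SS r - (-1) ^ r * (cc r : ℝ) = ∑ d ∈ r.divisors.erase r, g d := by
    rw [← hsum, hgr]; ring
  rw [hE]
  have hterm : ∀ d ∈ r.divisors.erase r, |g d| ≤ (cc (r / 2) : ℝ) := by
    intro d hd
    obtain ⟨hdne, hddvd⟩ := Finset.mem_erase.mp hd
    obtain ⟨hdvd, -⟩ := Nat.mem_divisors.mp hddvd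
    have hd1 : 1 ≤ d := Nat.pos_of_mem_divisors hddvd
    have hd2 : d ≤ r / 2 := by
      obtain ⟨k, hk⟩ := hdvd
      have hk2 : 2 ≤ k := by
        rcases Nat.lt_or_ge k 2 with h | h
        · interval_cases k <;> omega
        · exact h
      rw [Nat.le_div_iff_mul_le (by norm_num)]
      calc d * 2 ≤ d * k := Nat.mul_le_mul_left d hk2
        _ = r := hk.symm
    have hmu : |(ArithmeticFunction.moebius (r / d) : ℝ)| ≤ 1 := by
      exact_mod_cast (ArithmeticFunction.abs_moebius_le_one (n := r / d))
    have hccd : (Nat.choose (6 * d - 1) (d - 1) : ℝ) ≤ (cc (r / 2) : ℝ) := by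
      exact_mod_cast cc_mono hd1 hd2
    calc |g d| = |(ArithmeticFunction.moebius (r / d) : ℝ)| * |(-1 : ℝ) ^ d| *
        |(Nat.choose (6 * d - 1) (d - 1) : ℝ)| := by rw [hg]; simp [abs_mul]
      _ = |(ArithmeticFunction.moebius (r / d) : ℝ)| *
          (Nat.choose (6 * d - 1) (d - 1) : ℝ) := by
            simp [abs_pow]
      _ ≤ 1 * (cc (r / 2) : ℝ) := by
            apply mul_le_mul hmu hccd (by positivity) (by norm_num)
      _ = (cc (r / 2) : ℝ) := by ring
  calc |∑ d ∈ r.divisors.erase r, g d| ≤ ∑ d ∈ r.divisors.erase r, |g d| :=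
        Finset.abs_sum_le_sum_abs _ _
    _ ≤ (r.divisors.erase r).card • (cc (r / 2) : ℝ) := Finset.sum_le_card_nsmul _ _ _ hterm
    _ = ((r.divisors.erase r).card : ℝ) * (cc (r / 2) : ℝ) := nsmul_eq_mul _ _
    _ ≤ r * cc (r / 2) := by
        have h1 : (r.divisors.erase r).card ≤ r := by
          calc (r.divisors.erase r).card ≤ r.divisors.card := Finset.card_erase_le
            _ ≤ (Finset.Icc 1 r).card := Finset.card_le_card (fun d hd =>
                Finset.mem_Icc.mpr ⟨Nat.pos_of_mem_divisors hd, Nat.divisor_le hd⟩)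
            _ = r := by rw [Nat.card_Icc]; omega
        have : ((r.divisors.erase r).card : ℝ) ≤ r := by exact_mod_cast h1
        have hc : (0:ℝ) ≤ (cc (r / 2) : ℝ) := by positivity
        nlinarith

lemma uu_tendsto : Tendsto uu atTop (nhds 1) := by
  have key : ∀ r : ℕ, 2 ≤ r → ‖uu r - 1‖ ≤ (r : ℝ) / 2 ^ r := by
    intro r hr
    have hf := ff_ne r
    have habs : |(-1 : ℝ) ^ r * (cc r : ℝ)| = (cc r : ℝ) := by
      rw [abs_mul, abs_pow]; simp
    have h1 : uu r - 1 = (SS r - (-1) ^ r * (cc r : ℝ)) / ((-1) ^ r * (cc r : ℝ)) := by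
      rw [uu]; field_simp
      rw [sub_div, mul_div_cancel_right₀ _ (by exact_mod_cast (cc_pos r).ne' : (cc r : ℝ) ≠ 0)]
    have h2 : ‖uu r - 1‖ = |SS r - (-1) ^ r * (cc r : ℝ)| / (cc r : ℝ) := by
      rw [Real.norm_eq_abs, h1, abs_div, habs]
    rw [h2]
    have hgrow : (2 : ℕ) ^ r * cc (r / 2) ≤ cc r := by
      have ha : 1 ≤ r / 2 := by omega
      have hg := cc_growth (r / 2) (r - r / 2) ha
      rw [show r / 2 + (r - r / 2) = r by omega] at hg
      refine le_trans ?_ hg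
      have h26 : (2 : ℕ) ^ r ≤ 6 ^ (r - r / 2) := by
        calc (2 : ℕ) ^ r ≤ 2 ^ (2 * (r - r / 2)) := Nat.pow_le_pow_right (by norm_num) (by omega)
          _ = 4 ^ (r - r / 2) := by rw [pow_mul]; norm_num
          _ ≤ 6 ^ (r - r / 2) := Nat.pow_le_pow_left (by norm_num) _
      exact Nat.mul_le_mul_right _ h26
    have hgrowR : (2 : ℝ) ^ r * (cc (r / 2) : ℝ) ≤ (cc r : ℝ) := by exact_mod_cast hgrow
    have hcc2 : (0 : ℝ) < (cc (r / 2) : ℝ) := by exact_mod_cast cc_pos (r / 2)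
    have hccr : (0 : ℝ) < (cc r : ℝ) := by exact_mod_cast cc_pos r
    have hden : (0 : ℝ) < (2 : ℝ) ^ r * (cc (r / 2) : ℝ) := by positivity
    calc |SS r - (-1) ^ r * (cc r : ℝ)| / (cc r : ℝ)
        ≤ ((r : ℝ) * cc (r / 2)) / (cc r : ℝ) := by
          gcongr
          exact err_bound r hr
      _ ≤ ((r : ℝ) * cc (r / 2)) / ((2 : ℝ) ^ r * (cc (r / 2) : ℝ)) := by
          gcongr
      _ = (r : ℝ) / 2 ^ r := by
          rw [mul_comm ((2:ℝ)^r) _, ← div_div, mul_div_assoc, div_self hcc2.ne', mul_one]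
  have hzero : Tendsto (fun r : ℕ => uu r - 1) atTop (nhds 0) := by
    apply squeeze_zero_norm' (Filter.eventually_atTop.mpr ⟨2, key⟩)
    have := tendsto_pow_const_div_const_pow_of_one_lt 1 (by norm_num : (1:ℝ) < 2)
    simpa using this
  have := hzero.add_const 1
  simpa using this

/-- **Growth rate of the top BPS invariants of the knot 5₂.**
For `b r = (1/r²)·∑_{d ∣ r} μ(r/d)·(−1)^d·C(6d − 1, d − 1)`, the ratio
`b r / b (r+1)` tends to `−5⁵/6⁶ = −3125/46656` as `r → ∞`. -/
theorem five_two_top_bps_growth_rate (b : ℕ → ℝ)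
    (hb : ∀ r : ℕ, 1 ≤ r → b r = (1 / (r : ℝ) ^ 2) *
      ∑ d ∈ r.divisors, (ArithmeticFunction.moebius (r / d) : ℝ) * (-1) ^ d *
        (Nat.choose (6 * d - 1) (d - 1) : ℝ)) :
    Filter.Tendsto (fun r : ℕ => b r / b (r + 1)) Filter.atTop
      (nhds (-(3125 / 46656))) := by
  have hb' : ∀ r : ℕ, 1 ≤ r → b r = 1 / (r : ℝ) ^ 2 * SS r := hb
  have hu : Tendsto uu atTop (nhds 1) := uu_tendsto
  have hu1 : Tendsto (fun r : ℕ => uu (r + 1)) atTop (nhds 1) :=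
    hu.comp (tendsto_add_atTop_nat 1)
  have hr2 : Tendsto (fun r : ℕ => ((r : ℝ) + 1) ^ 2 / (r : ℝ) ^ 2) atTop (nhds 1) := by
    have h := (lin_tendsto 1 1 1 0 (by norm_num) (by norm_num)).pow 2
    rw [show ((1 : ℝ) / 1) ^ 2 = 1 by norm_num] at h
    refine h.congr fun n => ?_
    rw [div_pow]
    norm_num
  have hprod := (hr2.mul cc_ratio_tendsto.neg).mul (hu.div hu1 one_ne_zero)
  rw [show (1 * -(3125 / 46656 : ℝ) * (1 / 1)) = -(3125 / 46656) by norm_num] at hprod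
  refine hprod.congr' ?_
  filter_upwards [hu.eventually_ne one_ne_zero, hu1.eventually_ne one_ne_zero,
    eventually_ge_atTop 1] with r h1 h2 hr
  have hbr : b r = 1 / (r : ℝ) ^ 2 * ((-1) ^ r * (cc r : ℝ) * uu r) := by
    rw [hb' r hr, SS_eq]
  have hbr1 : b (r + 1) = 1 / ((r : ℝ) + 1) ^ 2 *
      ((-1) ^ (r + 1) * (cc (r + 1) : ℝ) * uu (r + 1)) := by
    rw [hb' (r + 1) (by omega), SS_eq]
    push_cast
    ring
  rw [hbr, hbr1]
  have hrr : (r : ℝ) ≠ 0 := by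
    have : (1 : ℝ) ≤ r := by exact_mod_cast hr
    linarith
  have hrr1 : ((r : ℝ) + 1) ≠ 0 := by positivity
  have hc1 : (cc r : ℝ) ≠ 0 := by exact_mod_cast (cc_pos r).ne'
  have hc2 : (cc (r + 1) : ℝ) ≠ 0 := by exact_mod_cast (cc_pos (r + 1)).ne'
  have hneg : ((-1 : ℝ)) ^ r ≠ 0 := pow_ne_zero _ (by norm_num)
  simp only [Pi.div_apply]
  rw [pow_succ]
  field_simp
  ring
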